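/- At the zeros s₁,₂ of the averaged system f = (f₁, f₂, f₃) from the zero-Hopf bifurcation at the origin, the determinant of the Jacobian of f equals 2a₁b₁c(3ce₁ + 2√3·d₁√(c²+ω²))/(3ω⁵). -/

import Mathlib

lemma deriv_affine' (a b : ℝ) (x : ℝ) : deriv (fun t => a * t + b) x = a := by
  have h : HasDerivAt (fun t : ℝ => a * t + b) (a * 1) x :=
    ((hasDerivAt_id x).const_mul a).add_const b
  simpa using h.deriv

lemma deriv_quad' (a b : ℝ) (x : ℝ) : deriv (fun t => a * t ^ 2 + b) x = 2 * a * x := by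
  have h : HasDerivAt (fun t : ℝ => a * t ^ 2 + b) (a * (2 * x ^ 1)) x :=
    (((hasDerivAt_pow 2 x)).const_mul a).add_const b
  simpa using h.deriv.trans (by ring)



/-- At the zeros `s₁,₂` of the averaged system from the zero-Hopf bifurcation at the
origin, the Jacobian determinant equals `2a₁b₁c(3ce₁ + 2√3·d₁√(c²+ω²))/(3ω⁵)`. -/
theorem averaged_system_origin_jacobian_s12
    (ω c a₁ b₁ d₁ e₁ : ℝ) (hω : 0 < ω) (hc : 0 < c)
    (hrad : 0 ≤ b₁ * (3 * c * e₁ + 2 * Real.sqrt 3 * d₁ * Real.sqrt (c ^ 2 + ω ^ 2))) :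
    let f₁ : ℝ → ℝ → ℝ → ℝ := fun r Z W =>
      r * (6 * c ^ 2 * (e₁ - W) - 3 * a₁ * ω ^ 2
        + 4 * Real.sqrt 3 * c * d₁ * Real.sqrt (c ^ 2 + ω ^ 2)) / (6 * ω ^ 3)
    let f₂ : ℝ → ℝ → ℝ → ℝ := fun r Z W =>
      -(2 * c * Z * (3 * c * (e₁ - W)
        + 2 * Real.sqrt 3 * d₁ * Real.sqrt (c ^ 2 + ω ^ 2))) / (3 * ω ^ 3)
    let f₃ : ℝ → ℝ → ℝ → ℝ := fun r Z W =>
      (12 * c ^ 4 * Z ^ 2 + 2 * c ^ 2 * r ^ 2 * ω ^ 2 - 3 * b₁ * W * ω ^ 4) / (3 * ω ^ 5)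
    let r₀ : ℝ := 0
    let W₀ : ℝ := e₁ + 2 * d₁ * Real.sqrt (c ^ 2 + ω ^ 2) / (Real.sqrt 3 * c)
    ∀ Z₀ : ℝ,
      (Z₀ = -(Real.sqrt (b₁ * ω ^ 4 * (3 * c * e₁
            + 2 * Real.sqrt 3 * d₁ * Real.sqrt (c ^ 2 + ω ^ 2)))
          / (2 * Real.sqrt 3 * (c ^ 2 * Real.sqrt c))) ∨
       Z₀ = Real.sqrt (b₁ * ω ^ 4 * (3 * c * e₁
            + 2 * Real.sqrt 3 * d₁ * Real.sqrt (c ^ 2 + ω ^ 2)))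
          / (2 * Real.sqrt 3 * (c ^ 2 * Real.sqrt c))) →
      Matrix.det
          !![deriv (fun r => f₁ r Z₀ W₀) r₀, deriv (fun Z => f₁ r₀ Z W₀) Z₀,
              deriv (fun W => f₁ r₀ Z₀ W) W₀;
             deriv (fun r => f₂ r Z₀ W₀) r₀, deriv (fun Z => f₂ r₀ Z W₀) Z₀,
              deriv (fun W => f₂ r₀ Z₀ W) W₀;
             deriv (fun r => f₃ r Z₀ W₀) r₀, deriv (fun Z => f₃ r₀ Z W₀) Z₀,
              deriv (fun W => f₃ r₀ Z₀ W) W₀] =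
        2 * a₁ * b₁ * c * (3 * c * e₁
          + 2 * Real.sqrt 3 * d₁ * Real.sqrt (c ^ 2 + ω ^ 2)) / (3 * ω ^ 5) := by
  intro f₁ f₂ f₃ r₀ W₀ Z₀ hZ
  have h3 : (0:ℝ) < 3 := by norm_num
  have hS : (0:ℝ) < Real.sqrt 3 := Real.sqrt_pos.mpr h3
  have hS2 : Real.sqrt 3 ^ 2 = 3 := Real.sq_sqrt h3.le
  have hsc : (0:ℝ) < Real.sqrt c := Real.sqrt_pos.mpr hc
  have hsc2 : Real.sqrt c ^ 2 = c := Real.sq_sqrt hc.le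
  set Q := Real.sqrt (c ^ 2 + ω ^ 2) with hQdef
  set K := 3 * c * e₁ + 2 * Real.sqrt 3 * d₁ * Q with hKdef
  have hZ2 : Z₀ ^ 2 = b₁ * ω ^ 4 * K / (12 * c ^ 5) := by
    have hR : (0:ℝ) ≤ b₁ * ω ^ 4 * K := by
      have h1 : b₁ * ω ^ 4 * K = ω ^ 4 * (b₁ * K) := by ring
      rw [h1]; exact mul_nonneg (by positivity) hrad
    have hsq : Real.sqrt (b₁ * ω ^ 4 * K) ^ 2 = b₁ * ω ^ 4 * K := Real.sq_sqrt hR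
    have hden : (2 * Real.sqrt 3 * (c ^ 2 * Real.sqrt c)) ^ 2 = 12 * c ^ 5 := by
      have h1 : (2 * Real.sqrt 3 * (c ^ 2 * Real.sqrt c)) ^ 2
          = 4 * Real.sqrt 3 ^ 2 * c ^ 4 * Real.sqrt c ^ 2 := by ring
      rw [h1, hS2, hsc2]; ring
    have habs : Z₀ ^ 2 = (Real.sqrt (b₁ * ω ^ 4 * K)
        / (2 * Real.sqrt 3 * (c ^ 2 * Real.sqrt c))) ^ 2 := by
      rcases hZ with h | h <;> rw [h] <;> ring
    rw [habs, div_pow, hsq, hden]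
  -- bracket identity at W₀
  have hB : 3 * c * (e₁ - W₀) + 2 * Real.sqrt 3 * d₁ * Q = 0 := by
    have hc' : c ≠ 0 := hc.ne'
    have hS' : Real.sqrt 3 ≠ 0 := hS.ne'
    simp only [W₀]
    field_simp
    ring_nf
    rw [hS2]
    ring
  -- the nine partial derivatives
  have h11 : deriv (fun r => f₁ r Z₀ W₀) r₀ = -(a₁ / (2 * ω)) := by
    have he : (fun r => f₁ r Z₀ W₀) = fun r =>
        ((6 * c ^ 2 * (e₁ - W₀) - 3 * a₁ * ω ^ 2 + 4 * Real.sqrt 3 * c * d₁ * Q)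
          / (6 * ω ^ 3)) * r + 0 := by
      funext r; simp only [f₁]; ring
    rw [he, deriv_affine']
    have hb : 6 * c ^ 2 * (e₁ - W₀) - 3 * a₁ * ω ^ 2 + 4 * Real.sqrt 3 * c * d₁ * Q
        = -(3 * a₁ * ω ^ 2) := by
      have h1 : 6 * c ^ 2 * (e₁ - W₀) - 3 * a₁ * ω ^ 2 + 4 * Real.sqrt 3 * c * d₁ * Q
          = 2 * c * (3 * c * (e₁ - W₀) + 2 * Real.sqrt 3 * d₁ * Q) - 3 * a₁ * ω ^ 2 := by
        ring
      rw [h1, hB]; ring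
    rw [hb]; field_simp; ring
  have h12 : deriv (fun Z => f₁ r₀ Z W₀) Z₀ = 0 := by
    have he : (fun Z => f₁ r₀ Z W₀) = fun Z => (0:ℝ) * Z + 0 := by
      funext Z; simp only [f₁, r₀]; ring
    rw [he, deriv_affine']
  have h13 : deriv (fun W => f₁ r₀ Z₀ W) W₀ = 0 := by
    have he : (fun W => f₁ r₀ Z₀ W) = fun W => (0:ℝ) * W + 0 := by
      funext W; simp only [f₁, r₀]; ring
    rw [he, deriv_affine']
  have h21 : deriv (fun r => f₂ r Z₀ W₀) r₀ = 0 := by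
    have he : (fun r => f₂ r Z₀ W₀) = fun r => (0:ℝ) * r +
        -(2 * c * Z₀ * (3 * c * (e₁ - W₀) + 2 * Real.sqrt 3 * d₁ * Q)) / (3 * ω ^ 3) := by
      funext r; simp only [f₂]; ring
    rw [he, deriv_affine']
  have h22 : deriv (fun Z => f₂ r₀ Z W₀) Z₀ = 0 := by
    have he : (fun Z => f₂ r₀ Z W₀) = fun Z =>
        (-(2 * c * (3 * c * (e₁ - W₀) + 2 * Real.sqrt 3 * d₁ * Q)) / (3 * ω ^ 3)) * Z
          + 0 := by
      funext Z; simp only [f₂]; ring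
    rw [he, deriv_affine', hB]; ring
  have h23 : deriv (fun W => f₂ r₀ Z₀ W) W₀ = 2 * c ^ 2 * Z₀ / ω ^ 3 := by
    have he : (fun W => f₂ r₀ Z₀ W) = fun W =>
        (2 * c ^ 2 * Z₀ / ω ^ 3) * W +
          -(2 * c * Z₀ * (3 * c * e₁ + 2 * Real.sqrt 3 * d₁ * Q)) / (3 * ω ^ 3) := by
      funext W; simp only [f₂]
      have hω' : ω ≠ 0 := hω.ne'
      field_simp; ring
    rw [he, deriv_affine']
  have h31 : deriv (fun r => f₃ r Z₀ W₀) r₀ = 0 := by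
    have he : (fun r => f₃ r Z₀ W₀) = fun r =>
        (2 * c ^ 2 * ω ^ 2 / (3 * ω ^ 5)) * r ^ 2 +
          (12 * c ^ 4 * Z₀ ^ 2 - 3 * b₁ * W₀ * ω ^ 4) / (3 * ω ^ 5) := by
      funext r; simp only [f₃]; ring
    rw [he, deriv_quad']
    simp only [r₀]; ring
  have h32 : deriv (fun Z => f₃ r₀ Z W₀) Z₀ = 8 * c ^ 4 * Z₀ / ω ^ 5 := by
    have he : (fun Z => f₃ r₀ Z W₀) = fun Z =>
        (12 * c ^ 4 / (3 * ω ^ 5)) * Z ^ 2 +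
          (2 * c ^ 2 * r₀ ^ 2 * ω ^ 2 - 3 * b₁ * W₀ * ω ^ 4) / (3 * ω ^ 5) := by
      funext Z; simp only [f₃]; ring
    rw [he, deriv_quad']
    have hω' : ω ≠ 0 := hω.ne'
    field_simp; ring
  have h33 : deriv (fun W => f₃ r₀ Z₀ W) W₀ = -(b₁ / ω) := by
    have he : (fun W => f₃ r₀ Z₀ W) = fun W =>
        (-(3 * b₁ * ω ^ 4) / (3 * ω ^ 5)) * W +
          (12 * c ^ 4 * Z₀ ^ 2 + 2 * c ^ 2 * r₀ ^ 2 * ω ^ 2) / (3 * ω ^ 5) := by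
      funext W; simp only [f₃]; ring
    rw [he, deriv_affine']
    have hω' : ω ≠ 0 := hω.ne'
    field_simp
  rw [h11, h12, h13, h21, h22, h23, h31, h32, h33, Matrix.det_fin_three]
  have hω' : ω ≠ 0 := hω.ne'
  have hc' : c ≠ 0 := hc.ne'
  have key : Z₀ ^ 2 * (12 * c ^ 5) = b₁ * ω ^ 4 * K := by
    rw [hZ2]; field_simp
  simp only [Matrix.of_apply, Matrix.cons_val', Matrix.cons_val_zero, Matrix.cons_val_one,
    Matrix.cons_val_two, Matrix.empty_val', Matrix.cons_val_fin_one, Matrix.head_cons,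
    Matrix.tail_cons, Matrix.vecHead, Matrix.vecTail, Function.comp_apply, Fin.succ_zero_eq_one,
    Matrix.cons_val_succ]
  field_simp
  linear_combination 4 * a₁ * c * key
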